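/- Let A, K ⊆ ℝⁿ with dim̄_B(K) + dim_H(A) < n. Then for every ε > 0, for almost all ξ ∈ ℝⁿ with |ξ| < ε, the translate ξ + K is disjoint from A. -/

import Mathlib

open Filter Metric Set ENNReal

/-- Smallest number of `ε`-balls needed to cover `s` (`⊤` if no finite cover exists). -/
noncomputable def coverNum {X : Type*} [PseudoMetricSpace X] (s : Set X) (ε : ℝ) : ℕ∞ :=
  sInf {m : ℕ∞ | ∃ t : Finset X, (t.card : ℕ∞) = m ∧ s ⊆ ⋃ x ∈ t, Metric.ball x ε}

/-- Upper box-counting (Minkowski) dimension. -/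
noncomputable def upperBoxDim {X : Type*} [PseudoMetricSpace X] (s : Set X) : ℝ≥0∞ :=
  Filter.limsup
    (fun ε : ℝ =>
      if coverNum s ε = ⊤ then (⊤ : ℝ≥0∞)
      else ENNReal.ofReal (Real.log ((coverNum s ε).toNat) / Real.log ε⁻¹))
    (nhdsWithin 0 (Set.Ioi 0))

/- Auxiliary lemmas -/

lemma aux_box_cover {X : Type*} [PseudoMetricSpace X] {K : Set X} (hK : K.Nonempty)
    {t : ℝ} (ht : 0 < t) (h : upperBoxDim K < ENNReal.ofReal t) :
    ∃ δ₀ : ℝ, 0 < δ₀ ∧ δ₀ ≤ 1 ∧ ∀ d : ℝ, 0 < d → d < δ₀ →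
      ∃ F : Finset X, (F.card : ℝ) ≤ d ^ (-t) ∧ K ⊆ ⋃ x ∈ F, Metric.ball x d := by
  rw [upperBoxDim] at h
  have hev := Filter.eventually_lt_of_limsup_lt h
  have h1 : ∀ᶠ d in nhdsWithin 0 (Set.Ioi (0:ℝ)), d < 1 := by
    filter_upwards [Ioo_mem_nhdsGT_of_mem (by constructor <;> norm_num :
      (0:ℝ) ∈ Set.Ico (0:ℝ) 1)] with d hd using hd.2
  obtain ⟨u, hu, hsub⟩ := mem_nhdsGT_iff_exists_Ioo_subset.1 (hev.and h1)
  refine ⟨min u 1, lt_min hu one_pos, min_le_right _ _, fun d hd0 hdδ => ?_⟩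
  obtain ⟨hft, hd1⟩ := hsub ⟨hd0, lt_of_lt_of_le hdδ (min_le_left _ _)⟩
  have hfin : coverNum K d ≠ ⊤ := by
    intro hc; rw [if_pos hc] at hft; exact not_top_lt hft
  rw [if_neg hfin] at hft
  set m := (coverNum K d).toNat with hm
  have hcovm : coverNum K d = (m : ℕ∞) := (ENat.coe_toNat hfin).symm
  have hone : 1 ≤ coverNum K d := by
    refine le_sInf ?_
    rintro b ⟨F, rfl, hcovF⟩
    have hFne : F.Nonempty := by
      rcases F.eq_empty_or_nonempty with rfl | hne
      · obtain ⟨k, hk⟩ := hK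
        exact absurd (hcovF hk) (by simp)
      · exact hne
    exact_mod_cast Nat.one_le_cast.2 hFne.card_pos
  have hm1 : 1 ≤ m := by
    rw [hcovm] at hone; exact_mod_cast hone
  have hlog : 0 < Real.log d⁻¹ := Real.log_pos ((one_lt_inv₀ hd0).2 hd1)
  have hdiv : Real.log m / Real.log d⁻¹ < t := (ENNReal.ofReal_lt_ofReal_iff ht).1 hft
  have h2 : Real.log m < t * Real.log d⁻¹ := by
    rw [div_lt_iff₀ hlog] at hdiv; linarith
  have hmpos : (0:ℝ) < m := by exact_mod_cast hm1
  have hmr : (m : ℝ) ≤ d ^ (-t) := by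
    calc (m:ℝ) = Real.exp (Real.log m) := (Real.exp_log hmpos).symm
      _ ≤ Real.exp (t * Real.log d⁻¹) := Real.exp_le_exp.2 h2.le
      _ = d⁻¹ ^ t := by rw [Real.rpow_def_of_pos (inv_pos.2 hd0), mul_comm]
      _ = d ^ (-t) := by rw [Real.inv_rpow hd0.le, ← Real.rpow_neg hd0.le]
  have hlt : coverNum K d < ((m + 1 : ℕ) : ℕ∞) := by
    rw [hcovm]; exact_mod_cast Nat.lt_succ_self m
  rw [coverNum] at hlt
  obtain ⟨b, ⟨F, hbcard, hFcov⟩, hb⟩ := sInf_lt_iff.1 hlt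
  rw [← hbcard] at hb
  have hcard : F.card ≤ m := by
    have : F.card < m + 1 := by exact_mod_cast hb
    omega
  exact ⟨F, le_trans (by exact_mod_cast Nat.cast_le.2 hcard) hmr, hFcov⟩

open MeasureTheory in
lemma aux_hausdorff_cover {X : Type*} [EMetricSpace X] [MeasurableSpace X] [BorelSpace X]
    {A : Set X} {s : ℝ} (hs : 0 < s) (h : dimH A < ENNReal.ofReal s)
    {r η : ℝ} (hr : 0 < r) (hη : 0 < η) :
    ∃ U : ℕ → Set X, A ⊆ ⋃ i, U i ∧ (∀ i, EMetric.diam (U i) ≤ ENNReal.ofReal r) ∧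
      ∑' i, ⨆ _ : (U i).Nonempty, EMetric.diam (U i) ^ s ≤ ENNReal.ofReal η := by
  have h0 : μH[s] A = 0 := by
    have hd : dimH A < (s.toNNReal : ℝ≥0∞) := by rwa [ENNReal.ofReal] at h
    have := hausdorffMeasure_of_dimH_lt hd
    rwa [Real.coe_toNNReal _ hs.le] at this
  rw [MeasureTheory.Measure.hausdorffMeasure_apply] at h0
  have h1 : (⨅ (U : ℕ → Set X) (_ : A ⊆ ⋃ n, U n)
      (_ : ∀ n, EMetric.diam (U n) ≤ ENNReal.ofReal r),
      ∑' n, ⨆ _ : (U n).Nonempty, EMetric.diam (U n) ^ s) = 0 := by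
    refine le_antisymm ?_ zero_le
    rw [← h0]
    exact le_iSup₂ (f := fun (r' : ℝ≥0∞) (_ : 0 < r') =>
      ⨅ (t : ℕ → Set X) (_ : A ⊆ ⋃ n, t n) (_ : ∀ n, EMetric.diam (t n) ≤ r'),
        ∑' n, ⨆ _ : (t n).Nonempty, EMetric.diam (t n) ^ s)
      (ENNReal.ofReal r) (ENNReal.ofReal_pos.2 hr)
  have h2 : (⨅ (U : ℕ → Set X) (_ : A ⊆ ⋃ n, U n)
      (_ : ∀ n, EMetric.diam (U n) ≤ ENNReal.ofReal r),
      ∑' n, ⨆ _ : (U n).Nonempty, EMetric.diam (U n) ^ s) < ENNReal.ofReal η := by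
    rw [h1]; exact ENNReal.ofReal_pos.2 hη
  rw [iInf_lt_iff] at h2
  obtain ⟨U, h2⟩ := h2
  rw [iInf_lt_iff] at h2
  obtain ⟨hcov, h2⟩ := h2
  rw [iInf_lt_iff] at h2
  obtain ⟨hdiam, h2⟩ := h2
  exact ⟨U, hcov, hdiam, h2.le⟩

lemma aux_rpow_add_le {a b s : ℝ} (ha : 0 ≤ a) (hb : 0 ≤ b) (hs : 0 ≤ s) :
    (a + b) ^ s ≤ 2 ^ s * (a ^ s + b ^ s) := by
  have hmax : a + b ≤ 2 * max a b := by
    rcases le_total a b with hab | hab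
    · have := max_eq_right hab; nlinarith [le_max_right a b]
    · have := max_eq_left hab; nlinarith [le_max_left a b]
  have hmax0 : 0 ≤ max a b := le_trans ha (le_max_left _ _)
  calc (a + b) ^ s ≤ (2 * max a b) ^ s :=
        Real.rpow_le_rpow (by positivity) hmax hs
    _ = 2 ^ s * (max a b) ^ s := Real.mul_rpow (by norm_num) hmax0
    _ ≤ 2 ^ s * (a ^ s + b ^ s) := by
        refine mul_le_mul_of_nonneg_left ?_ (by positivity)
        rcases le_total a b with hab | hab
        · rw [max_eq_right hab]
          exact le_add_of_nonneg_left (Real.rpow_nonneg ha s)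
        · rw [max_eq_left hab]
          exact le_add_of_nonneg_right (Real.rpow_nonneg hb s)

open MeasureTheory Pointwise in
theorem ae_translate_avoids_of_dim (n : ℕ) (A K : Set (EuclideanSpace ℝ (Fin n)))
    (h : upperBoxDim K + dimH A < (n : ℝ≥0∞)) (ε : ℝ) (hε : 0 < ε) :
    volume {ξ : EuclideanSpace ℝ (Fin n) | ‖ξ‖ < ε ∧ ¬ Disjoint (ξ +ᵥ K) A} = 0 := by
  classical
  rcases Nat.eq_zero_or_pos n with hn | hn
  · subst hn; exact absurd h (by simp)
  rcases K.eq_empty_or_nonempty with rfl | hKne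
  · have : {ξ : EuclideanSpace ℝ (Fin n) | ‖ξ‖ < ε ∧ ¬ Disjoint (ξ +ᵥ (∅ : Set _)) A} = ∅ := by
      ext ξ; simp
    rw [this, measure_empty]
  have hbt : upperBoxDim K ≠ ⊤ :=
    (lt_of_le_of_lt (le_add_right le_rfl) (h.trans_le le_top)).ne
  have hat : dimH A ≠ ⊤ :=
    (lt_of_le_of_lt (le_add_left le_rfl) (h.trans_le le_top)).ne
  set α := (dimH A).toReal with hα
  set β := (upperBoxDim K).toReal with hβ
  have hαβ : α + β < n := by
    have h' := (ENNReal.toReal_lt_toReal (ENNReal.add_ne_top.2 ⟨hbt, hat⟩) (ENNReal.natCast_ne_top n)).2 h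
    rw [ENNReal.toReal_add hbt hat] at h'
    simpa [add_comm] using h'
  set γ := ((n:ℝ) - α - β)/2 with hγdef
  have hγ : 0 < γ := by simp only [hγdef]; linarith
  set s := α + γ with hsdef
  set t := β + γ with htdef
  have hα0 : 0 ≤ α := ENNReal.toReal_nonneg
  have hβ0 : 0 ≤ β := ENNReal.toReal_nonneg
  have hs : 0 < s := by positivity
  have ht : 0 < t := by positivity
  have hst : s + t = n := by simp only [hsdef, htdef, hγdef]; ring
  have hA : dimH A < ENNReal.ofReal s := by
    rw [ENNReal.lt_ofReal_iff_toReal_lt hat]; simp only [hsdef, ← hα]; linarith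
  have hK' : upperBoxDim K < ENNReal.ofReal t := by
    rw [ENNReal.lt_ofReal_iff_toReal_lt hbt]; simp only [htdef, ← hβ]; linarith
  obtain ⟨δ₀, hδ0, hδ1, hcov⟩ := aux_box_cover hKne ht hK'
  set r := δ₀/4 with hrdef
  have hrpos : 0 < r := by positivity
  set V := volume (Metric.ball (0:EuclideanSpace ℝ (Fin n)) 1) with hV
  have hVfin : V ≠ ⊤ := measure_ball_lt_top.ne
  set C : ℝ≥0∞ := ENNReal.ofReal (3^n) * V * ENNReal.ofReal (2^s) * 2 with hC
  have hCfin : C ≠ ⊤ := by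
    simp only [hC]
    exact ENNReal.mul_ne_top (ENNReal.mul_ne_top
      (ENNReal.mul_ne_top ENNReal.ofReal_ne_top hVfin) ENNReal.ofReal_ne_top)
      (by norm_num)
  suffices hmain : ∀ η : ℝ, 0 < η →
      volume {ξ : EuclideanSpace ℝ (Fin n) | ‖ξ‖ < ε ∧ ¬ Disjoint (ξ +ᵥ K) A} ≤ C * ENNReal.ofReal η by
    have htof : Tendsto (fun η : ℝ => ENNReal.ofReal η) (nhdsWithin 0 (Set.Ioi (0:ℝ))) (nhds 0) := by
      have := (ENNReal.continuous_ofReal.tendsto 0)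
      simpa using this.mono_left nhdsWithin_le_nhds
    have htend : Tendsto (fun η : ℝ => C * ENNReal.ofReal η)
        (nhdsWithin 0 (Set.Ioi (0:ℝ))) (nhds 0) := by
      simpa using ENNReal.Tendsto.const_mul htof (Or.inr hCfin)
    refine le_antisymm (ge_of_tendsto htend ?_) zero_le
    exact eventually_of_mem self_mem_nhdsWithin fun η hη => hmain η hη
  intro η hη
  obtain ⟨U, hUcov, hUdiam, hUsum⟩ := aux_hausdorff_cover hs hA hrpos hη
  set Dm : ℕ → ℝ := fun i => Metric.diam (U i) with hDm
  have hDm0 : ∀ i, 0 ≤ Dm i := fun i => Metric.diam_nonneg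
  have hDmr : ∀ i, Dm i ≤ r := fun i =>
    ENNReal.toReal_le_of_le_ofReal hrpos.le (hUdiam i)
  have hUfin : ∀ i, EMetric.diam (U i) ≠ ⊤ :=
    fun i => ((hUdiam i).trans_lt ENNReal.ofReal_lt_top).ne
  have hDmeq : ∀ i, ENNReal.ofReal (Dm i) = EMetric.diam (U i) :=
    fun i => ENNReal.ofReal_toReal (hUfin i)
  set c : ℕ → ℝ := fun i => min r ((η * (2⁻¹:ℝ) ^ (i+1)) ^ (1/s)) with hc
  have hc0 : ∀ i, 0 < c i := fun i =>
    lt_min hrpos (Real.rpow_pos_of_pos (by positivity) _)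
  have hcr : ∀ i, c i ≤ r := fun i => min_le_left _ _
  have hcs : ∀ i, (c i) ^ s ≤ η * (2⁻¹:ℝ) ^ (i+1) := by
    intro i
    have h1 : (c i) ^ s ≤ (((η * (2⁻¹:ℝ) ^ (i+1)) ^ (1/s))) ^ s :=
      Real.rpow_le_rpow (hc0 i).le (min_le_right _ _) hs.le
    rwa [← Real.rpow_mul (by positivity), one_div, inv_mul_cancel₀ hs.ne',
      Real.rpow_one] at h1
  set d : ℕ → ℝ := fun i => Dm i + c i with hd
  have hd0 : ∀ i, 0 < d i := fun i => add_pos_of_nonneg_of_pos (hDm0 i) (hc0 i)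
  have hdδ : ∀ i, d i < δ₀ := by
    intro i
    have := hDmr i; have := hcr i
    simp only [hd]; simp only [hrdef] at *; linarith
  choose F hFcard hFcov using fun i => hcov (d i) (hd0 i) (hdδ i)
  set z : ℕ → EuclideanSpace ℝ (Fin n) := fun i => if hi : (U i).Nonempty then hi.choose else 0 with hz
  set S : ℕ → Set (EuclideanSpace ℝ (Fin n)) := fun i =>
    if (U i).Nonempty then ⋃ x ∈ F i, Metric.ball (z i - x) (3 * d i) else ∅ with hS
  have hsub : {ξ : EuclideanSpace ℝ (Fin n) | ‖ξ‖ < ε ∧ ¬ Disjoint (ξ +ᵥ K) A} ⊆ ⋃ i, S i := by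
    rintro ξ ⟨-, hdis⟩
    rw [Set.not_disjoint_iff] at hdis
    obtain ⟨p, hpK, hpA⟩ := hdis
    obtain ⟨k, hk, rfl⟩ : ∃ k ∈ K, ξ + k = p := by
      simpa [Set.mem_vadd_set] using hpK
    obtain ⟨i, hpi⟩ := Set.mem_iUnion.1 (hUcov hpA)
    have hne : (U i).Nonempty := ⟨_, hpi⟩
    have hkx : k ∈ ⋃ x ∈ F i, Metric.ball x (d i) := hFcov i hk
    simp only [Set.mem_iUnion, Metric.mem_ball, exists_prop] at hkx
    obtain ⟨x, hxF, hkx⟩ := hkx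
    have hzi : z i ∈ U i := by
      simp only [hz, dif_pos hne]; exact hne.choose_spec
    have hbd : Bornology.IsBounded (U i) := by
      rw [Metric.isBounded_iff_ediam_ne_top]; exact hUfin i
    have h1 : dist (ξ + k) (z i) ≤ Dm i := Metric.dist_le_diam_of_mem hbd hpi hzi
    refine Set.mem_iUnion.2 ⟨i, ?_⟩
    simp only [hS, if_pos hne, Set.mem_iUnion, Metric.mem_ball, exists_prop]
    refine ⟨x, hxF, ?_⟩
    have hξ : ξ = (ξ + k) - k := by abel
    calc dist ξ (z i - x) = dist ((ξ + k) - k) (z i - x) := by rw [← hξ]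
      _ ≤ dist (ξ + k) (z i) + dist k x := dist_sub_sub_le _ _ _ _
      _ < 3 * d i := by
          have hDd : Dm i ≤ d i := by
            simp only [hd]; linarith [hc0 i]
          have := hd0 i
          linarith
  have key : ∀ i, volume (S i) ≤
      ENNReal.ofReal (3^n) * V * ENNReal.ofReal ((d i) ^ s) := by
    intro i
    by_cases hne : (U i).Nonempty
    · simp only [hS, if_pos hne]
      have hball : ∀ x : EuclideanSpace ℝ (Fin n), volume (Metric.ball x (3 * d i)) =
          ENNReal.ofReal ((3 * d i) ^ n) * V := by
        intro x
        rw [hV, Measure.addHaar_ball_of_pos _ x (by positivity : (0:ℝ) < 3 * d i),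
          finrank_euclideanSpace_fin]
      calc volume (⋃ x ∈ F i, Metric.ball (z i - x) (3 * d i))
          ≤ ∑ x ∈ F i, volume (Metric.ball (z i - x) (3 * d i)) :=
            measure_biUnion_finset_le _ _
        _ = (F i).card * (ENNReal.ofReal ((3 * d i) ^ n) * V) := by
            rw [Finset.sum_congr rfl fun x _ => hball (z i - x), Finset.sum_const,
              nsmul_eq_mul]
        _ ≤ ENNReal.ofReal ((d i) ^ (-t)) * (ENNReal.ofReal ((3 * d i) ^ n) * V) := by
            refine mul_le_mul_left ?_ _
            rw [← ENNReal.ofReal_natCast]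
            exact ENNReal.ofReal_le_ofReal (hFcard i)
        _ = ENNReal.ofReal (3^n) * V * ENNReal.ofReal ((d i) ^ s) := by
            rw [← mul_assoc, ← ENNReal.ofReal_mul (Real.rpow_nonneg (hd0 i).le _)]
            have hreal : (d i) ^ (-t) * (3 * d i) ^ n = 3^n * (d i) ^ s := by
              rw [mul_pow, ← Real.rpow_natCast (d i) n, ← mul_assoc,
                mul_comm ((d i) ^ (-t)), mul_assoc, ← Real.rpow_add (hd0 i)]
              congr 1
              congr 1
              linarith
            rw [hreal, ENNReal.ofReal_mul (by positivity)]
            ring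
    · simp only [hS, if_neg hne, measure_empty]
      exact zero_le
  have hsum : ∑' i, ENNReal.ofReal ((d i) ^ s) ≤
      ENNReal.ofReal (2^s) * (ENNReal.ofReal η + ENNReal.ofReal η) := by
    have hpt : ∀ i, ENNReal.ofReal ((d i) ^ s) ≤
        ENNReal.ofReal (2^s) * (ENNReal.ofReal ((Dm i)^s) + ENNReal.ofReal ((c i)^s)) := by
      intro i
      have hre : (d i) ^ s ≤ 2^s * ((Dm i)^s + (c i)^s) :=
        aux_rpow_add_le (hDm0 i) (hc0 i).le hs.le
      calc ENNReal.ofReal ((d i) ^ s) ≤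
          ENNReal.ofReal (2^s * ((Dm i)^s + (c i)^s)) := ENNReal.ofReal_le_ofReal hre
        _ = ENNReal.ofReal (2^s) * (ENNReal.ofReal ((Dm i)^s) + ENNReal.ofReal ((c i)^s)) := by
            rw [ENNReal.ofReal_mul (by positivity),
              ENNReal.ofReal_add (Real.rpow_nonneg (hDm0 i) s) (Real.rpow_nonneg (hc0 i).le s)]
    have hsum1 : ∑' i, ENNReal.ofReal ((Dm i)^s) ≤ ENNReal.ofReal η := by
      refine le_trans (ENNReal.tsum_le_tsum fun i => ?_) hUsum
      by_cases hne : (U i).Nonempty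
      · rw [iSup_pos hne, ← hDmeq i,
          ← ENNReal.ofReal_rpow_of_nonneg (hDm0 i) hs.le]
      · have : Dm i = 0 := by
          simp only [hDm, Set.not_nonempty_iff_eq_empty.1 hne, Metric.diam_empty]
        rw [this, Real.zero_rpow hs.ne', ENNReal.ofReal_zero]
        exact zero_le
    have hsum2 : ∑' i, ENNReal.ofReal ((c i)^s) ≤ ENNReal.ofReal η := by
      have hpt2 : ∀ i, ENNReal.ofReal ((c i)^s) ≤
          ENNReal.ofReal η * (2⁻¹ : ℝ≥0∞) ^ (i+1) := by
        intro i
        calc ENNReal.ofReal ((c i)^s) ≤ ENNReal.ofReal (η * (2⁻¹:ℝ) ^ (i+1)) :=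
            ENNReal.ofReal_le_ofReal (hcs i)
          _ = ENNReal.ofReal η * (2⁻¹ : ℝ≥0∞) ^ (i+1) := by
            rw [ENNReal.ofReal_mul hη.le, ENNReal.ofReal_pow (by norm_num)]
            congr 2
            rw [ENNReal.ofReal_inv_of_pos (by norm_num)]
            norm_num
      refine le_trans (ENNReal.tsum_le_tsum hpt2) ?_
      rw [ENNReal.tsum_mul_left]
      have hgeo : ∑' i : ℕ, (2⁻¹ : ℝ≥0∞) ^ (i+1) = 1 := by
        have : ∑' i : ℕ, (2⁻¹ : ℝ≥0∞) ^ (i+1) = 2⁻¹ * ∑' i : ℕ, (2⁻¹ : ℝ≥0∞) ^ i := by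
          rw [← ENNReal.tsum_mul_left]
          congr 1; ext i; rw [pow_succ, mul_comm]
        rw [this, ENNReal.tsum_geometric, ENNReal.one_sub_inv_two, inv_inv,
          ENNReal.inv_mul_cancel (by norm_num) (by norm_num)]
      rw [hgeo, mul_one]
    calc ∑' i, ENNReal.ofReal ((d i) ^ s)
        ≤ ∑' i, ENNReal.ofReal (2^s) *
            (ENNReal.ofReal ((Dm i)^s) + ENNReal.ofReal ((c i)^s)) :=
          ENNReal.tsum_le_tsum hpt
      _ = ENNReal.ofReal (2^s) *
            ((∑' i, ENNReal.ofReal ((Dm i)^s)) + ∑' i, ENNReal.ofReal ((c i)^s)) := by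
          rw [ENNReal.tsum_mul_left, ENNReal.tsum_add]
      _ ≤ ENNReal.ofReal (2^s) * (ENNReal.ofReal η + ENNReal.ofReal η) := by
          exact mul_le_mul_right (add_le_add hsum1 hsum2) _
  calc volume {ξ : EuclideanSpace ℝ (Fin n) | ‖ξ‖ < ε ∧ ¬ Disjoint (ξ +ᵥ K) A}
      ≤ volume (⋃ i, S i) := measure_mono hsub
    _ ≤ ∑' i, volume (S i) := measure_iUnion_le _
    _ ≤ ∑' i, ENNReal.ofReal (3^n) * V * ENNReal.ofReal ((d i) ^ s) :=
        ENNReal.tsum_le_tsum key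
    _ = ENNReal.ofReal (3^n) * V * ∑' i, ENNReal.ofReal ((d i) ^ s) :=
        ENNReal.tsum_mul_left
    _ ≤ ENNReal.ofReal (3^n) * V *
        (ENNReal.ofReal (2^s) * (ENNReal.ofReal η + ENNReal.ofReal η)) :=
        mul_le_mul_right hsum _
    _ = C * ENNReal.ofReal η := by
        rw [hC]; ring
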